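/- Under the reparametrization for radial functions (d ≥ 2): set τ' = τ, p' = p, q' = q, a' = a, s' = s, α' = α + (d−1)/p, β' = β + (d−1)/q, γ' = γ + (d−1)/τ, and define σ by γ = aσ + (1−a)β and σ' by γ' = a'σ' + (1−a')β'. If the balance law 1/τ + γ/d = a(1/p + (α−s)/d) + (1−a)(1/q + β/d) holds, then α' − σ' = (α − σ)/d + s(d−1)/d. In particular α' − σ' ≥ 0 if and only if α − σ ≥ −s(d−1). -/

import Mathlib

theorem radial_reparametrization (d : ℕ) (s p q τ a α β γ σ σ' : ℝ)
    (hd : 2 ≤ d) (hs : 0 < s) (hs1 : s ≤ 1)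
    (hp : 1 ≤ p) (hq : 1 ≤ q) (hτ : 1 ≤ τ) (ha : 0 < a) (ha1 : a ≤ 1)
    (hσ : γ = a * σ + (1 - a) * β)
    (hσ' : γ + (d - 1) / τ = a * σ' + (1 - a) * (β + (d - 1) / q))
    (hbal : 1 / τ + γ / d = a * (1 / p + (α - s) / d) + (1 - a) * (1 / q + β / d)) :
    (α + (d - 1) / p) - σ' = (α - σ) / d + s * (d - 1) / d ∧
      (0 ≤ (α + (d - 1) / p) - σ' ↔ -(s * (d - 1)) ≤ α - σ) := by
  have hd0 : (0:ℝ) < d := by positivity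
  have hdne : (d:ℝ) ≠ 0 := hd0.ne'
  have hane : a ≠ 0 := ha.ne'
  have hτne : τ ≠ 0 := by positivity
  have hpne : p ≠ 0 := by positivity
  have hqne : q ≠ 0 := by positivity
  have h1 : (α + (d - 1) / p) - σ' = (α - σ) / d + s * (d - 1) / d := by
    linear_combination (norm := (field_simp; ring)) (1/a)*((((d:ℝ)-1)/d) - 1)*hσ + (1/a)*hσ' - (((d:ℝ)-1)/a)*hbal
  refine ⟨h1, ?_⟩
  rw [h1]
  rw [← add_div, le_div_iff₀ hd0]
  constructor <;> intro h <;> nlinarith
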